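/- For q ≥ 1, the generating function for the total number of 1s over all q-decreasing words of length n is P_{q,1}(x) = x(1 − q x^q + q x^{q+1} − 2 x^{q+1} + x^{2q+2}) / (1 − 2x + x^{q+2})^2. -/

import Mathlib

/-- A binary word (`List Bool`, `true` = bit 1) is `q`-decreasing if it is a
concatenation `1^{b0} ++ 0^{a1}1^{b1} ++ ... ++ 0^{am}1^{bm}` where every
block `0^a 1^b` with `a > 0` satisfies `q*a > b` (equivalently, every maximal
factor of the form `0^a 1^b` with `a > 0` satisfies `q*a > b`). -/
inductive QDecreasing (q : ℕ) : List Bool → Prop where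
  | ones (m : ℕ) : QDecreasing q (List.replicate m true)
  | snoc (w : List Bool) (a b : ℕ) (ha : 0 < a) (hb : b < q * a)
      (hw : QDecreasing q w) :
      QDecreasing q (w ++ List.replicate a false ++ List.replicate b true)

/-- The popularity of the bit `b` among `q`-decreasing words of length `n`:
the number of pairs (word, position) where the word is a `q`-decreasing word of
length `n` carrying the bit `b` at the given position. -/
noncomputable def qdecPopularity (q : ℕ) (b : Bool) (n : ℕ) : ℕ :=
  Nat.card {p : List Bool × ℕ //
    p.1.length = n ∧ QDecreasing q p.1 ∧ p.1[p.2]? = some b}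

namespace QDecGF
open List

/-- A word is good if it does not end in `false`. -/
def Good (w : List Bool) : Prop := w.getLast? ≠ some false

lemma good_nil : Good ([] : List Bool) := by simp [Good]

lemma good_replicate_true (m : ℕ) : Good (replicate m true) := by
  cases m with
  | zero => simp [Good]
  | succ m => simp [Good, getLast?_replicate]

lemma getLast?_append_of_ne_nil {l l' : List Bool} (h : l' ≠ []) :
    (l ++ l').getLast? = l'.getLast? := by
  rw [getLast?_append]
  cases h' : l'.getLast? with
  | none => exact absurd (getLast?_eq_none_iff.mp h') h
  | some a => rfl

lemma good_append_rep_true {u : List Bool} {a b : ℕ} (hb : 0 < b) :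
    Good (u ++ replicate a false ++ replicate b true) := by
  have : (u ++ replicate a false ++ replicate b true).getLast? = some true := by
    rw [getLast?_append_of_ne_nil (by simp [hb.ne'] : replicate b true ≠ [])]
    cases b with
    | zero => omega
    | succ b => simp [getLast?_replicate]
  rw [Good, this]; simp

/-- canonical decomposition of a q-decreasing word -/
lemma decomp {q : ℕ} {w : List Bool} (h : QDecreasing q w) :
    (∃ m, w = replicate m true) ∨
    ∃ u a b, QDecreasing q u ∧ Good u ∧ 0 < a ∧ b < q * a ∧
      w = u ++ replicate a false ++ replicate b true := by
  induction h with
  | ones m => exact Or.inl ⟨m, rfl⟩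
  | snoc w a b ha hb hw ih =>
    right
    rcases ih with ⟨m, rfl⟩ | ⟨u, a', b', hu, hgu, ha', hb', hw'⟩
    · exact ⟨_, a, b, QDecreasing.ones m, good_replicate_true m, ha, hb, rfl⟩
    · rcases Nat.eq_zero_or_pos b' with rfl | hb'pos
      · refine ⟨u, a' + a, b, hu, hgu, by omega, ?_, ?_⟩
        · calc b < q * a := hb
            _ ≤ q * (a' + a) := Nat.mul_le_mul_left _ (by omega)
        · subst hw'
          rw [replicate_add]
          simp [append_assoc]
      · exact ⟨w, a, b, hw, hw' ▸ good_append_rep_true hb'pos, ha, hb, rfl⟩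



def tTrue (w : List Bool) : ℕ := (w.reverse.takeWhile (· == true)).length
def tFalse (w : List Bool) : ℕ :=
  ((w.reverse.drop (tTrue w)).takeWhile (· == false)).length
def core (w : List Bool) : List Bool :=
  ((w.reverse.drop (tTrue w)).drop (tFalse w)).reverse

lemma takeWhile_replicate_append (c : Bool) (b : ℕ) (l : List Bool) :
    ((replicate b c ++ l).takeWhile (· == c)) = replicate b c ++ l.takeWhile (· == c) := by
  induction b with
  | zero => simp
  | succ b ih => simp [replicate_succ, takeWhile_cons, ih]

lemma takeWhile_eq_nil_of_head {c : Bool} {l : List Bool} (h : l.head? ≠ some c) :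
    l.takeWhile (· == c) = [] := by
  cases l with
  | nil => rfl
  | cons x t =>
    simp only [head?_cons, ne_eq, Option.some_inj] at h
    simp [takeWhile_cons, h]

lemma extract_spec {u : List Bool} {a b : ℕ} (hg : Good u) (ha : 0 < a) :
    tTrue (u ++ replicate a false ++ replicate b true) = b ∧
    tFalse (u ++ replicate a false ++ replicate b true) = a ∧
    core (u ++ replicate a false ++ replicate b true) = u := by
  set w := u ++ replicate a false ++ replicate b true with hw
  have hrev : w.reverse = replicate b true ++ (replicate a false ++ u.reverse) := by
    simp [hw, reverse_append, append_assoc]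
  have hrepa : replicate a false ++ u.reverse = false :: (replicate (a-1) false ++ u.reverse) := by
    cases a with
    | zero => omega
    | succ a => simp [replicate_succ]
  have hurev : u.reverse.takeWhile (· == false) = [] := by
    apply takeWhile_eq_nil_of_head
    rw [show u.reverse.head? = u.getLast? from head?_reverse]
    exact hg
  have h1 : tTrue w = b := by
    rw [tTrue, hrev, takeWhile_replicate_append]
    rw [hrepa, takeWhile_eq_nil_of_head (by simp)]
    simp
  have hdrop : w.reverse.drop (tTrue w) = replicate a false ++ u.reverse := by
    rw [h1, hrev, List.drop_left' (by simp)]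
  have h2 : tFalse w = a := by
    rw [tFalse, hdrop, takeWhile_replicate_append, hurev]
    simp
  refine ⟨h1, h2, ?_⟩
  rw [core, hdrop, h2, List.drop_left' (by simp), reverse_reverse]

lemma decomp_unique {u₁ u₂ : List Bool} {a₁ a₂ b₁ b₂ : ℕ}
    (hg₁ : Good u₁) (ha₁ : 0 < a₁) (hg₂ : Good u₂) (ha₂ : 0 < a₂)
    (h : u₁ ++ replicate a₁ false ++ replicate b₁ true
       = u₂ ++ replicate a₂ false ++ replicate b₂ true) :
    u₁ = u₂ ∧ a₁ = a₂ ∧ b₁ = b₂ := by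
  have e₁ := extract_spec (b := b₁) hg₁ ha₁
  have e₂ := extract_spec (b := b₂) hg₂ ha₂
  rw [h] at e₁
  refine ⟨?_, ?_, ?_⟩
  · rw [← e₁.2.2, e₂.2.2]
  · rw [← e₁.2.1, e₂.2.1]
  · rw [← e₁.1, e₂.1]

variable {q : ℕ}

lemma not_replicate_true {m : ℕ} {u : List Bool} {a b : ℕ} (ha : 0 < a)
    (h : replicate m true = u ++ replicate a false ++ replicate b true) : False := by
  have : false ∈ replicate m true := by
    rw [h]
    simp only [mem_append]
    exact Or.inl (Or.inr (by simp [mem_replicate]; omega))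
  simp [mem_replicate] at this

lemma qdec_append_false (hq : 1 ≤ q) {w : List Bool} (h : QDecreasing q w) :
    QDecreasing q (w ++ [false]) := by
  have := QDecreasing.snoc w 1 0 (by omega) (by omega) h
  simpa using this

lemma qdec_of_append_false (hq : 1 ≤ q) {w : List Bool}
    (h : QDecreasing q (w ++ [false])) : QDecreasing q w := by
  rcases decomp h with ⟨m, hm⟩ | ⟨u, a, b, hu, hgu, ha, hb, he⟩
  · exact absurd (hm ▸ (by simp : (w ++ [false]).getLast? = some false))
      (by cases m with
          | zero => simp at hm
          | succ m => simp [getLast?_replicate])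
  · -- b must be zero
    rcases Nat.eq_zero_or_pos b with rfl | hbpos
    · simp only [replicate_zero, append_nil] at he
      have ha' : replicate a false = replicate (a-1) false ++ [false] := by
        rw [← replicate_succ']
        congr 1
        omega
      rw [ha', ← append_assoc] at he
      have hw : w = u ++ replicate (a-1) false := append_inj' he rfl |>.1
      rcases Nat.eq_zero_or_pos (a-1) with h0 | hpos
      · rw [hw, h0]
        simpa using hu
      · have := QDecreasing.snoc u (a-1) 0 hpos (by nlinarith) hu
        rw [hw]
        simpa using this
    · have h1 : (w ++ [false]).getLast? = some false := by simp
      rw [he] at h1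
      exact absurd h1 (good_append_rep_true hbpos)

lemma qdec_of_append_true (hq : 1 ≤ q) {w : List Bool}
    (h : QDecreasing q (w ++ [true])) : QDecreasing q w := by
  rcases decomp h with ⟨m, hm⟩ | ⟨u, a, b, hu, hgu, ha, hb, he⟩
  · cases m with
    | zero => simp at hm
    | succ m =>
      rw [replicate_succ'] at hm
      have : w = replicate m true := append_inj' hm rfl |>.1
      exact this ▸ QDecreasing.ones m
  · rcases Nat.eq_zero_or_pos b with rfl | hbpos
    · have h1 : (w ++ [true]).getLast? = some true := by simp
      rw [he] at h1
      simp only [replicate_zero, append_nil] at h1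
      rw [getLast?_append_of_ne_nil (by simp [ha.ne'] : replicate a false ≠ [])] at h1
      cases a with
      | zero => omega
      | succ a => simp [getLast?_replicate] at h1
    · have hb' : replicate b true = replicate (b-1) true ++ [true] := by
        rw [← replicate_succ']; congr 1; omega
      rw [hb', ← append_assoc] at he
      have hw : w = u ++ replicate a false ++ replicate (b-1) true := by
        have := append_inj' he rfl |>.1
        rw [this, append_assoc]
      exact hw ▸ QDecreasing.snoc u a (b-1) ha (by omega) hu

/-- the key characterization of blocked words -/
lemma blocked_iff (hq : 1 ≤ q) {w : List Bool} (hw : QDecreasing q w) :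
    ¬ QDecreasing q (w ++ [true]) ↔
    ∃ u a, QDecreasing q u ∧ Good u ∧ 0 < a ∧
      w = u ++ replicate a false ++ replicate (q * a - 1) true := by
  constructor
  · intro hblk
    rcases decomp hw with ⟨m, rfl⟩ | ⟨u, a, b, hu, hgu, ha, hb, he⟩
    · exact absurd (by simpa [← replicate_succ'] using QDecreasing.ones (m+1)) hblk
    · refine ⟨u, a, hu, hgu, ha, ?_⟩
      rcases Nat.lt_or_ge (b+1) (q*a) with hlt | hge
      · exfalso
        apply hblk
        rw [he, append_assoc, append_assoc]
        have : replicate b true ++ [true] = replicate (b+1) true := by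
          rw [replicate_succ']
        rw [this, ← append_assoc]
        exact QDecreasing.snoc u a (b+1) ha hlt hu
      · have : b = q * a - 1 := by omega
        rw [he, this]
  · rintro ⟨u, a, hu, hgu, ha, rfl⟩ hqd
    have hqa : 0 < q * a := by positivity
    have hrw : (u ++ replicate a false ++ replicate (q*a-1) true) ++ [true]
        = u ++ replicate a false ++ replicate (q*a) true := by
      rw [append_assoc, append_assoc, ← replicate_succ',
        show q*a - 1 + 1 = q*a by omega, ← append_assoc]
    rw [hrw] at hqd
    rcases decomp hqd with ⟨m, hm⟩ | ⟨u', a', b', hu', hgu', ha', hb', he'⟩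
    · exact not_replicate_true ha hm.symm
    · obtain ⟨rfl, rfl, hbb⟩ := decomp_unique hgu' ha' hgu ha he'.symm
      omega


/-! ### Counting -/

/-- the canonical blocked tail -/
def blk (q : ℕ) (u : List Bool) (a : ℕ) : List Bool :=
  u ++ replicate a false ++ replicate (q * a - 1) true

abbrev WA (q n : ℕ) := {w : List Bool // w.length = n ∧ QDecreasing q w}
abbrev WG (q n : ℕ) := {w : List Bool // (w.length = n ∧ QDecreasing q w) ∧ Good w}
abbrev WNB (q n : ℕ) :=
  {w : List Bool // (w.length = n ∧ QDecreasing q w) ∧ QDecreasing q (w ++ [true])}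
abbrev WBL (q n : ℕ) :=
  {w : List Bool // (w.length = n ∧ QDecreasing q w) ∧ ¬ QDecreasing q (w ++ [true])}

lemma finite_aux {n : ℕ} {P : List Bool → Prop} (h : ∀ w, P w → w.length = n) :
    Finite {w : List Bool // P w} := by
  have h1 : Finite {w : List Bool | w.length = n} :=
    Set.Finite.to_subtype (List.finite_length_eq Bool n)
  apply Finite.of_injective
    (fun x => (⟨x.1, h x.1 x.2⟩ : {w : List Bool | w.length = n}))
  intro x y hxy
  have h2 := congrArg Subtype.val hxy
  simp only at h2
  exact Subtype.ext h2

instance (q n : ℕ) : Finite (WA q n) := finite_aux (fun w hw => hw.1)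
instance (q n : ℕ) : Finite (WG q n) := finite_aux (fun w hw => hw.1.1)
instance (q n : ℕ) : Finite (WNB q n) := finite_aux (fun w hw => hw.1.1)
instance (q n : ℕ) : Finite (WBL q n) := finite_aux (fun w hw => hw.1.1)

noncomputable instance (q n : ℕ) : Fintype (WA q n) := Fintype.ofFinite _
noncomputable instance (q n : ℕ) : Fintype (WG q n) := Fintype.ofFinite _
noncomputable instance (q n : ℕ) : Fintype (WNB q n) := Fintype.ofFinite _
noncomputable instance (q n : ℕ) : Fintype (WBL q n) := Fintype.ofFinite _

open Classical in
/-- splitting a subtype along a further condition -/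
noncomputable def splitEquiv {α : Type*} (P Q : α → Prop) :
    {x // P x ∧ Q x} ⊕ {x // P x ∧ ¬ Q x} ≃ {x // P x} where
  toFun := Sum.elim (fun x => ⟨x.1, x.2.1⟩) (fun x => ⟨x.1, x.2.1⟩)
  invFun x := if h : Q x.1 then .inl ⟨x.1, x.2, h⟩ else .inr ⟨x.1, x.2, h⟩
  left_inv x := by
    rcases x with ⟨x, hP, hQ⟩ | ⟨x, hP, hQ⟩
    · simp [hQ]
    · simp [hQ]
  right_inv x := by
    by_cases h : Q x.1
    · simp [h]
    · simp [h]

variable {q : ℕ}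

/-- append-a-letter bijection -/
noncomputable def e2fun (hq : 1 ≤ q) (n : ℕ) : WA q n ⊕ WNB q n → WA q (n + 1) :=
  Sum.elim
    (fun w => ⟨w.1 ++ [false], by simp [w.2.1], qdec_append_false hq w.2.2⟩)
    (fun w => ⟨w.1 ++ [true], by simp [w.2.1.1], w.2.2⟩)

lemma e2fun_bij (hq : 1 ≤ q) (n : ℕ) : Function.Bijective (e2fun hq n) := by
  constructor
  · rintro (⟨w₁, h₁⟩ | ⟨w₁, h₁⟩) (⟨w₂, h₂⟩ | ⟨w₂, h₂⟩) h <;>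
      simp only [e2fun, Sum.elim_inl, Sum.elim_inr, Subtype.mk.injEq] at h
    · exact congrArg Sum.inl (Subtype.ext (List.append_inj' h rfl).1)
    · exact absurd (List.append_inj' h rfl).2 (by simp)
    · exact absurd (List.append_inj' h rfl).2 (by simp)
    · exact congrArg Sum.inr (Subtype.ext (List.append_inj' h rfl).1)
  · rintro ⟨w, hlen, hqd⟩
    have hne : w ≠ [] := by rintro rfl; simp at hlen
    obtain ⟨w', x, hwx⟩ : ∃ w' x, w = w' ++ [x] :=
      ⟨w.dropLast, w.getLast hne, (dropLast_append_getLast hne).symm⟩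
    subst hwx
    have hlen' : w'.length = n := by simpa using hlen
    cases x with
    | false =>
        exact ⟨.inl ⟨w', hlen', qdec_of_append_false hq hqd⟩, rfl⟩
    | true =>
        exact ⟨.inr ⟨w', ⟨hlen', qdec_of_append_true hq hqd⟩, hqd⟩, rfl⟩

/-- last-letter-is-one bijection -/
noncomputable def e1fun (hq : 1 ≤ q) (n : ℕ) : WG q (n + 1) ⊕ WA q n → WA q (n + 1) :=
  Sum.elim
    (fun w => ⟨w.1, w.2.1⟩)
    (fun w => ⟨w.1 ++ [false], by simp [w.2.1], qdec_append_false hq w.2.2⟩)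

lemma e1fun_bij (hq : 1 ≤ q) (n : ℕ) : Function.Bijective (e1fun hq n) := by
  constructor
  · rintro (⟨w₁, h₁⟩ | ⟨w₁, h₁⟩) (⟨w₂, h₂⟩ | ⟨w₂, h₂⟩) h <;>
      simp only [e1fun, Sum.elim_inl, Sum.elim_inr, Subtype.mk.injEq] at h
    · exact congrArg Sum.inl (Subtype.ext h)
    · exact absurd (h ▸ (by simp : (w₂ ++ [false]).getLast? = some false)) h₁.2
    · exact absurd (h.symm ▸ (by simp : (w₁ ++ [false]).getLast? = some false)) h₂.2
    · exact congrArg Sum.inr (Subtype.ext (List.append_inj' h rfl).1)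
  · rintro ⟨w, hlen, hqd⟩
    cases hLast : w.getLast? with
    | none =>
        rw [getLast?_eq_none_iff] at hLast
        subst hLast; simp at hlen
    | some x =>
        cases x with
        | true => exact ⟨.inl ⟨w, ⟨hlen, hqd⟩, by rw [Good, hLast]; simp⟩, rfl⟩
        | false =>
            have hwx : w.dropLast ++ [false] = w := dropLast_append_getLast? _ hLast
            have hlen' : w.dropLast.length = n := by
              rw [length_dropLast, hlen]; rfl
            refine ⟨.inr ⟨w.dropLast, hlen', ?_⟩, Subtype.ext hwx⟩
            exact qdec_of_append_false hq (by rwa [hwx])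

lemma blk_length (u : List Bool) (a : ℕ) :
    (blk q u a).length = u.length + a + (q * a - 1) := by
  simp [blk]; omega

lemma blk_count (u : List Bool) (a : ℕ) :
    (blk q u a).count true = u.count true + (q * a - 1) := by
  simp [blk, count_append, count_replicate]

lemma blk_qdec (hu : QDecreasing q u) (hg : Good u) (ha : 0 < a) (hq : 1 ≤ q) :
    QDecreasing q (blk q u a) :=
  QDecreasing.snoc u a (q * a - 1) ha
    (by have : 1 ≤ q * a := Nat.one_le_iff_ne_zero.mpr (by positivity); omega) hu

lemma blk_blocked (hq : 1 ≤ q) (hu : QDecreasing q u) (hg : Good u) (ha : 0 < a) :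
    ¬ QDecreasing q (blk q u a ++ [true]) :=
  (blocked_iff hq (blk_qdec hu hg ha hq)).mpr ⟨u, a, hu, hg, ha, rfl⟩

lemma blk_extract (hg : Good u) (ha : 0 < a) :
    core (blk q u a) = u ∧ tFalse (blk q u a) = a := by
  obtain ⟨h1, h2, h3⟩ := extract_spec (b := q * a - 1) hg ha
  exact ⟨h3, h2⟩

lemma blk_inj {u u' : List Bool} {a a' : ℕ} (hg : Good u) (ha : 0 < a)
    (hg' : Good u') (ha' : 0 < a') (h : blk q u a = blk q u' a') :
    u = u' ∧ a = a' := by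
  obtain ⟨h1, h2, -⟩ := decomp_unique hg ha hg' ha' h
  exact ⟨h1, h2⟩

lemma blocked_spec (hq : 1 ≤ q) {w : List Bool} {m : ℕ} (hlen : w.length = m)
    (hqd : QDecreasing q w) (hblk : ¬ QDecreasing q (w ++ [true])) :
    QDecreasing q (core w) ∧ Good (core w) ∧ 0 < tFalse w ∧
      w = blk q (core w) (tFalse w) ∧
      (core w).length + (q + 1) * tFalse w = m + 1 := by
  obtain ⟨u, a, hu, hg, ha, he⟩ := (blocked_iff hq hqd).mp hblk
  have hc : core w = u := by rw [he]; exact (blk_extract hg ha).1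
  have hf : tFalse w = a := by rw [he]; exact (blk_extract hg ha).2
  have hqa : 1 ≤ q * a := Nat.one_le_iff_ne_zero.mpr (by positivity)
  refine ⟨hc ▸ hu, hc ▸ hg, hf ▸ ha, by rw [hc, hf]; exact he, ?_⟩
  have hl : w.length = u.length + a + (q * a - 1) := by rw [he]; exact blk_length u a
  have h2 : (q + 1) * a = q * a + a := by ring
  rw [hc, hf]
  omega

/-- the block-shortening bijection for blocked words -/
noncomputable def e7fun (hq : 1 ≤ q) (m : ℕ) :
    WG q (m + 1) ⊕ WBL q m → WBL q (m + q + 1) :=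
  Sum.elim
    (fun u => ⟨blk q u.1 1,
      ⟨by have := blk_length (q := q) u.1 1; have h2 := u.2.1.1; omega,
       blk_qdec u.2.1.2 u.2.2 one_pos hq⟩,
      blk_blocked hq u.2.1.2 u.2.2 one_pos⟩)
    (fun w => ⟨blk q (core w.1) (tFalse w.1 + 1),
      ⟨by
        obtain ⟨hu, hg, ha, hw, hl⟩ := blocked_spec hq w.2.1.1 w.2.1.2 w.2.2
        have h1 := blk_length (q := q) (core w.1) (tFalse w.1 + 1)
        have h2 : q * (tFalse w.1 + 1) = q * tFalse w.1 + q := by ring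
        have h3 : (q + 1) * tFalse w.1 = q * tFalse w.1 + tFalse w.1 := by ring
        omega,
       by
        obtain ⟨hu, hg, ha, hw, hl⟩ := blocked_spec hq w.2.1.1 w.2.1.2 w.2.2
        exact blk_qdec hu hg (by omega) hq⟩,
      by
        obtain ⟨hu, hg, ha, hw, hl⟩ := blocked_spec hq w.2.1.1 w.2.1.2 w.2.2
        exact blk_blocked hq hu hg (by omega)⟩)

lemma e7fun_bij (hq : 1 ≤ q) (m : ℕ) : Function.Bijective (e7fun hq m) := by
  have hval : ∀ x, (e7fun hq m x).1 = Sum.elim (fun u : WG q (m+1) => blk q u.1 1)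
      (fun w : WBL q m => blk q (core w.1) (tFalse w.1 + 1)) x := by
    rintro (u | w) <;> rfl
  constructor
  · rintro x y h
    have h' := congrArg Subtype.val h
    rw [hval x, hval y] at h'
    rcases x with u₁ | w₁ <;> rcases y with u₂ | w₂ <;>
      simp only [Sum.elim_inl, Sum.elim_inr] at h'
    · exact congrArg Sum.inl (Subtype.ext (blk_inj u₁.2.2 one_pos u₂.2.2 one_pos h').1)
    · obtain ⟨hu, hg, ha, hw, hl⟩ := blocked_spec hq w₂.2.1.1 w₂.2.1.2 w₂.2.2
      obtain ⟨-, h2⟩ := blk_inj u₁.2.2 one_pos hg (by omega) h'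
      omega
    · obtain ⟨hu, hg, ha, hw, hl⟩ := blocked_spec hq w₁.2.1.1 w₁.2.1.2 w₁.2.2
      obtain ⟨-, h2⟩ := blk_inj hg (by omega) u₂.2.2 one_pos h'
      omega
    · obtain ⟨hu₁, hg₁, ha₁, hw₁, hl₁⟩ := blocked_spec hq w₁.2.1.1 w₁.2.1.2 w₁.2.2
      obtain ⟨hu₂, hg₂, ha₂, hw₂, hl₂⟩ := blocked_spec hq w₂.2.1.1 w₂.2.1.2 w₂.2.2
      obtain ⟨hcc, hff⟩ := blk_inj hg₁ (by omega) hg₂ (by omega) h'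
      refine congrArg Sum.inr (Subtype.ext ?_)
      rw [hw₁, hw₂, hcc, show tFalse w₁.1 = tFalse w₂.1 by omega]
  · rintro ⟨w, ⟨hlen, hqd⟩, hblk⟩
    obtain ⟨hu, hg, ha, hw, hl⟩ := blocked_spec hq hlen hqd hblk
    have h3 : (q + 1) * tFalse w = q * tFalse w + tFalse w := by ring
    rcases eq_or_lt_of_le (Nat.succ_le_of_lt ha) with h1 | h2
    · -- tFalse w = 1
      have h1' : tFalse w = 1 := h1.symm
      have h5 : (q + 1) * tFalse w = q + 1 := by rw [h1']; ring
      refine ⟨.inl ⟨core w, ⟨?_, hu⟩, hg⟩, Subtype.ext ?_⟩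
      · omega
      · rw [hval]
        simp only [Sum.elim_inl]
        conv_rhs => rw [hw, h1']
    · -- tFalse w ≥ 2
      set c := tFalse w - 1 with hc
      have hcpos : 0 < c := by omega
      have hlc : (blk q (core w) c).length = m := by
        have h4 := blk_length (q := q) (core w) c
        have h5 : q * tFalse w = q * c + q := by
          rw [show tFalse w = c + 1 by omega]; ring
        have h6 : 1 ≤ q * c := Nat.one_le_iff_ne_zero.mpr (by positivity)
        omega
      refine ⟨.inr ⟨blk q (core w) c, ⟨hlc, blk_qdec hu hg hcpos hq⟩,
        blk_blocked hq hu hg hcpos⟩, Subtype.ext ?_⟩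
      rw [hval]
      simp only [Sum.elim_inr]
      obtain ⟨hce, hfe⟩ := blk_extract (q := q) hg hcpos
      rw [hce, hfe, show c + 1 = tFalse w by omega]
      exact hw.symm

/-! ### The counting sequences -/

noncomputable def fA (q n : ℕ) : ℕ := Nat.card (WA q n)
noncomputable def gA (q n : ℕ) : ℕ := Nat.card (WG q n)
noncomputable def nbA (q n : ℕ) : ℕ := Nat.card (WNB q n)
noncomputable def blA (q n : ℕ) : ℕ := Nat.card (WBL q n)
noncomputable def pA (q n : ℕ) : ℕ := ∑ w : WA q n, w.1.count true
noncomputable def pG (q n : ℕ) : ℕ := ∑ w : WG q n, w.1.count true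
noncomputable def pNB (q n : ℕ) : ℕ := ∑ w : WNB q n, w.1.count true
noncomputable def pBL (q n : ℕ) : ℕ := ∑ w : WBL q n, w.1.count true

lemma card_e2 (hq : 1 ≤ q) (n : ℕ) : fA q (n + 1) = fA q n + nbA q n := by
  rw [fA, Nat.card_congr (Equiv.ofBijective _ (e2fun_bij hq n)).symm, Nat.card_sum]; rfl

lemma sum_e2 (hq : 1 ≤ q) (n : ℕ) : pA q (n + 1) = pA q n + (pNB q n + nbA q n) := by
  rw [pA, ← Equiv.sum_comp (Equiv.ofBijective _ (e2fun_bij hq n))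
    (fun w : WA q (n+1) => w.1.count true), Fintype.sum_sum_type]
  have h1 : ∀ w : WA q n, ((e2fun hq n (.inl w)).1.count true) = w.1.count true := by
    intro w; simp [e2fun, count_append]
  have h2 : ∀ w : WNB q n, ((e2fun hq n (.inr w)).1.count true) = w.1.count true + 1 := by
    intro w; simp [e2fun, count_append]
  simp only [Equiv.ofBijective_apply, h1, h2]
  rw [Finset.sum_add_distrib]
  simp only [Finset.sum_const, smul_eq_mul, mul_one, Finset.card_univ]
  rw [pA, pNB, nbA, Nat.card_eq_fintype_card]

lemma card_e1 (hq : 1 ≤ q) (n : ℕ) : fA q (n + 1) = gA q (n + 1) + fA q n := by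
  rw [fA, Nat.card_congr (Equiv.ofBijective _ (e1fun_bij hq n)).symm, Nat.card_sum]; rfl

lemma sum_e1 (hq : 1 ≤ q) (n : ℕ) : pA q (n + 1) = pG q (n + 1) + pA q n := by
  rw [pA, ← Equiv.sum_comp (Equiv.ofBijective _ (e1fun_bij hq n))
    (fun w : WA q (n+1) => w.1.count true), Fintype.sum_sum_type]
  have h1 : ∀ w : WG q (n+1), ((e1fun hq n (.inl w)).1.count true) = w.1.count true := by
    intro w; rfl
  have h2 : ∀ w : WA q n, ((e1fun hq n (.inr w)).1.count true) = w.1.count true := by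
    intro w; simp [e1fun, count_append]
  simp only [Equiv.ofBijective_apply, h1, h2]
  rfl

lemma card_split (q n : ℕ) : fA q n = nbA q n + blA q n := by
  rw [fA, Nat.card_congr (splitEquiv (fun w => w.length = n ∧ QDecreasing q w)
    (fun w => QDecreasing q (w ++ [true]))).symm, Nat.card_sum]; rfl

lemma sum_split (q n : ℕ) : pA q n = pNB q n + pBL q n := by
  rw [pA, ← Equiv.sum_comp (splitEquiv (fun w => w.length = n ∧ QDecreasing q w)
    (fun w => QDecreasing q (w ++ [true]))) (fun w : WA q n => w.1.count true),
    Fintype.sum_sum_type]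
  have h1 : ∀ (w : WNB q n),
      (((splitEquiv _ _) (.inl w) : WA q n).1.count true) = w.1.count true := fun w => rfl
  have h2 : ∀ (w : WBL q n),
      (((splitEquiv _ _) (.inr w) : WA q n).1.count true) = w.1.count true := fun w => rfl
  simp only [h1, h2]
  rfl

lemma card_e7 (hq : 1 ≤ q) (m : ℕ) :
    blA q (m + q + 1) = gA q (m + 1) + blA q m := by
  rw [blA, Nat.card_congr (Equiv.ofBijective _ (e7fun_bij hq m)).symm, Nat.card_sum]; rfl

lemma sum_e7 (hq : 1 ≤ q) (m : ℕ) :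
    pBL q (m + q + 1) = (pG q (m + 1) + (q - 1) * gA q (m + 1))
      + (pBL q m + q * blA q m) := by
  rw [pBL, ← Equiv.sum_comp (Equiv.ofBijective _ (e7fun_bij hq m))
    (fun w : WBL q (m+q+1) => w.1.count true), Fintype.sum_sum_type]
  have h1 : ∀ u : WG q (m+1), ((e7fun hq m (.inl u)).1.count true)
      = u.1.count true + (q - 1) := by
    intro u
    have : (e7fun hq m (.inl u)).1 = blk q u.1 1 := rfl
    rw [this, blk_count]
    congr 1
    omega
  have h2 : ∀ w : WBL q m, ((e7fun hq m (.inr w)).1.count true)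
      = w.1.count true + q := by
    intro w
    obtain ⟨hu, hg, ha, hw, hl⟩ := blocked_spec hq w.2.1.1 w.2.1.2 w.2.2
    have hv : (e7fun hq m (.inr w)).1 = blk q (core w.1) (tFalse w.1 + 1) := rfl
    rw [hv, blk_count]
    have hwc : w.1.count true = (core w.1).count true + (q * tFalse w.1 - 1) := by
      conv_lhs => rw [hw]
      exact blk_count _ _
    have hqa : 1 ≤ q * tFalse w.1 := Nat.one_le_iff_ne_zero.mpr (by positivity)
    have h2' : q * (tFalse w.1 + 1) = q * tFalse w.1 + q := by ring
    omega
  simp only [Equiv.ofBijective_apply, h1, h2]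
  rw [Finset.sum_add_distrib, Finset.sum_add_distrib]
  simp only [Finset.sum_const, Finset.card_univ, smul_eq_mul]
  rw [pG, gA, pBL, blA, Nat.card_eq_fintype_card, Nat.card_eq_fintype_card]
  ring

/-! ### base cases -/

lemma fA_zero (q : ℕ) : fA q 0 = 1 := by
  letI : Unique (WA q 0) :=
    { default := ⟨[], rfl, by simpa using QDecreasing.ones 0⟩
      uniq := by rintro ⟨w, h1, h2⟩; apply Subtype.ext; exact List.length_eq_zero_iff.mp h1 }
  exact Nat.card_unique

lemma gA_zero (q : ℕ) : gA q 0 = 1 := by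
  letI : Unique (WG q 0) :=
    { default := ⟨[], ⟨rfl, by simpa using QDecreasing.ones 0⟩, good_nil⟩
      uniq := by rintro ⟨w, ⟨h1, h2⟩, h3⟩; apply Subtype.ext; exact List.length_eq_zero_iff.mp h1 }
  exact Nat.card_unique

lemma pA_zero (q : ℕ) : pA q 0 = 0 := by
  letI : Unique (WA q 0) :=
    { default := ⟨[], rfl, by simpa using QDecreasing.ones 0⟩
      uniq := by rintro ⟨w, h1, h2⟩; apply Subtype.ext; exact List.length_eq_zero_iff.mp h1 }
  rw [pA, Fintype.sum_unique]
  rfl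

lemma pG_zero (q : ℕ) : pG q 0 = 0 := by
  letI : Unique (WG q 0) :=
    { default := ⟨[], ⟨rfl, by simpa using QDecreasing.ones 0⟩, good_nil⟩
      uniq := by rintro ⟨w, ⟨h1, h2⟩, h3⟩; apply Subtype.ext; exact List.length_eq_zero_iff.mp h1 }
  rw [pG, Fintype.sum_unique]
  rfl

lemma WBL_isEmpty (hq : 1 ≤ q) {m : ℕ} (hm : m < q) : IsEmpty (WBL q m) := by
  constructor
  rintro ⟨w, ⟨hlen, hqd⟩, hblk⟩
  obtain ⟨hu, hg, ha, hw, hl⟩ := blocked_spec hq hlen hqd hblk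
  have h3 : (q + 1) * tFalse w = q * tFalse w + tFalse w := by ring
  have h4 : q * 1 ≤ q * tFalse w := Nat.mul_le_mul_left q ha
  omega

lemma blA_lt (hq : 1 ≤ q) {m : ℕ} (hm : m < q) : blA q m = 0 := by
  have := WBL_isEmpty hq hm
  exact Nat.card_of_isEmpty

lemma pBL_lt (hq : 1 ≤ q) {m : ℕ} (hm : m < q) : pBL q m = 0 := by
  have := WBL_isEmpty hq hm
  rw [pBL]
  simp [Finset.univ_eq_empty]

noncomputable def uniqueWBLq (hq : 1 ≤ q) : Unique (WBL q q) := by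
  have hmem : (blk q [] 1).length = q ∧ QDecreasing q (blk q [] 1)
      ∧ ¬ QDecreasing q (blk q [] 1 ++ [true]) := by
    refine ⟨?_, blk_qdec (by simpa using QDecreasing.ones 0) good_nil one_pos hq,
      blk_blocked hq (by simpa using QDecreasing.ones 0) good_nil one_pos⟩
    have := blk_length (q := q) [] 1
    simp at this
    omega
  refine { default := ⟨blk q [] 1, ⟨hmem.1, hmem.2.1⟩, hmem.2.2⟩, uniq := ?_ }
  rintro ⟨w, ⟨hlen, hqd⟩, hblk⟩
  obtain ⟨hu, hg, ha, hw, hl⟩ := blocked_spec hq hlen hqd hblk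
  have h3 : (q + 1) * tFalse w = q * tFalse w + tFalse w := by ring
  have h4 : q * 1 ≤ q * tFalse w := Nat.mul_le_mul_left q ha
  have h5 : tFalse w = 1 := by nlinarith
  have h6 : (core w).length = 0 := by omega
  apply Subtype.ext
  show w = blk q [] 1
  rw [hw, h5, List.length_eq_zero_iff.mp h6]

lemma blA_q (hq : 1 ≤ q) : blA q q = 1 := by
  letI := uniqueWBLq hq
  exact Nat.card_unique

lemma pBL_q (hq : 1 ≤ q) : pBL q q = q - 1 := by
  letI := uniqueWBLq hq
  rw [pBL, Fintype.sum_unique]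
  show (blk q [] 1).count true = q - 1
  rw [blk_count]
  simp

/-! ### popularity as a sum of counts -/

instance posFinite (l : List Bool) (b : Bool) : Finite {i : ℕ // l[i]? = some b} := by
  apply Finite.of_injective (fun x => (⟨x.1, by
    rcases x with ⟨i, hi⟩
    exact (List.getElem?_eq_some_iff.mp hi).1⟩ : Fin l.length))
  intro x y hxy
  exact Subtype.ext (congrArg Fin.val hxy)

noncomputable instance (l : List Bool) (b : Bool) : Fintype {i : ℕ // l[i]? = some b} :=
  Fintype.ofFinite _

lemma card_positions (l : List Bool) (b : Bool) :
    Nat.card {i : ℕ // l[i]? = some b} = l.count b := by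
  induction l with
  | nil =>
      have : IsEmpty {i : ℕ // ([] : List Bool)[i]? = some b} := by
        constructor; rintro ⟨i, hi⟩; simp at hi
      simp [Nat.card_of_isEmpty]
  | cons x t ih =>
      by_cases hx : x = b
      · have e : {i : ℕ // (x :: t)[i]? = some b} ≃ Option {i : ℕ // t[i]? = some b} :=
          { toFun := fun p => match p with
              | ⟨0, _⟩ => none
              | ⟨i+1, h⟩ => some ⟨i, by simpa using h⟩
            invFun := fun o => match o with
              | none => ⟨0, by simp [hx]⟩
              | some ⟨i, h⟩ => ⟨i+1, by simpa using h⟩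
            left_inv := by rintro ⟨i, h⟩; cases i <;> rfl
            right_inv := by rintro (_ | ⟨i, h⟩) <;> rfl }
        rw [Nat.card_congr e, Finite.card_option, ih, hx]
        simp [count_cons]
      · have e : {i : ℕ // (x :: t)[i]? = some b} ≃ {i : ℕ // t[i]? = some b} :=
          { toFun := fun p => match p with
              | ⟨0, h⟩ => absurd (by simpa using h) hx
              | ⟨i+1, h⟩ => ⟨i, by simpa using h⟩
            invFun := fun p => ⟨p.1+1, by simpa using p.2⟩
            left_inv := by rintro ⟨i, h⟩
                           cases i with
                           | zero => exact absurd (by simpa using h) hx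
                           | succ i => rfl
            right_inv := by rintro ⟨i, h⟩; rfl }
        rw [Nat.card_congr e, ih]
        simp [count_cons, hx, Ne.symm hx]

lemma popularity_eq (q n : ℕ) : qdecPopularity q true n = pA q n := by
  rw [qdecPopularity]
  have e : {p : List Bool × ℕ //
      p.1.length = n ∧ QDecreasing q p.1 ∧ p.1[p.2]? = some true}
      ≃ Σ w : WA q n, {i : ℕ // w.1[i]? = some true} :=
    { toFun := fun p => ⟨⟨p.1.1, p.2.1, p.2.2.1⟩, ⟨p.1.2, p.2.2.2⟩⟩
      invFun := fun s => ⟨(s.1.1, s.2.1), s.1.2.1, s.1.2.2, s.2.2⟩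
      left_inv := by rintro ⟨⟨w, i⟩, h⟩; rfl
      right_inv := by rintro ⟨⟨w, hw⟩, ⟨i, hi⟩⟩; rfl }
  rw [Nat.card_congr e, Nat.card_eq_fintype_card, Fintype.card_sigma, pA]
  apply Finset.sum_congr rfl
  intro w _
  rw [← Nat.card_eq_fintype_card, card_positions]

/-! ### power series -/

open PowerSeries

noncomputable def Fs (q : ℕ) : PowerSeries ℤ := .mk fun n => (fA q n : ℤ)
noncomputable def Gs (q : ℕ) : PowerSeries ℤ := .mk fun n => (gA q n : ℤ)
noncomputable def BLs (q : ℕ) : PowerSeries ℤ := .mk fun n => (blA q n : ℤ)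
noncomputable def Ps (q : ℕ) : PowerSeries ℤ := .mk fun n => (pA q n : ℤ)
noncomputable def PGs (q : ℕ) : PowerSeries ℤ := .mk fun n => (pG q n : ℤ)
noncomputable def PBLs (q : ℕ) : PowerSeries ℤ := .mk fun n => (pBL q n : ℤ)

lemma E1 (hq : 1 ≤ q) : Fs q + X * BLs q = 1 + (X * Fs q + X * Fs q) := by
  ext n
  rcases n with _ | n
  · simp [Fs, BLs, coeff_zero_X_mul, fA_zero]
  · simp only [map_add, coeff_succ_X_mul, coeff_one, Nat.succ_ne_zero, if_false,
      Fs, BLs, coeff_mk]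
    have h1 := card_e2 hq n
    have h2 := card_split q n
    push_cast
    omega

lemma E2 (hq : 1 ≤ q) : Ps q + X * PBLs q + X * BLs q = X * Fs q + (X * Ps q + X * Ps q) := by
  ext n
  rcases n with _ | n
  · simp [Ps, PBLs, BLs, Fs, coeff_zero_X_mul, pA_zero]
  · simp only [map_add, coeff_succ_X_mul, Ps, PBLs, BLs, Fs, coeff_mk]
    have h1 := sum_e2 hq n
    have h2 := sum_split q n
    have h3 := card_split q n
    push_cast
    omega

lemma E3 (hq : 1 ≤ q) : Fs q = Gs q + X * Fs q := by
  ext n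
  rcases n with _ | n
  · simp [Fs, Gs, coeff_zero_X_mul, fA_zero, gA_zero]
  · simp only [map_add, coeff_succ_X_mul, Fs, Gs, coeff_mk]
    have h1 := card_e1 hq n
    push_cast
    omega

lemma E4 (hq : 1 ≤ q) : Ps q = PGs q + X * Ps q := by
  ext n
  rcases n with _ | n
  · simp [Ps, PGs, coeff_zero_X_mul, pA_zero, pG_zero]
  · simp only [map_add, coeff_succ_X_mul, Ps, PGs, coeff_mk]
    have h1 := sum_e1 hq n
    push_cast
    omega

lemma E5 (hq : 1 ≤ q) : BLs q = Gs q * X ^ q + BLs q * X ^ (q + 1) := by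
  ext n
  rw [map_add, coeff_mul_X_pow', coeff_mul_X_pow']
  simp only [BLs, Gs, coeff_mk]
  rcases lt_trichotomy n q with h | rfl | h
  · rw [if_neg (by omega), if_neg (by omega), blA_lt hq h]
    simp
  · rw [if_pos le_rfl, if_neg (by omega), Nat.sub_self]
    simp [blA_q hq, gA_zero]
  · obtain ⟨m, rfl⟩ : ∃ m, n = m + q + 1 := ⟨n - q - 1, by omega⟩
    rw [if_pos (by omega), if_pos (by omega),
      show m + q + 1 - q = m + 1 by omega, show m + q + 1 - (q + 1) = m by omega]
    have h1 := card_e7 hq m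
    push_cast
    omega

lemma E6 (hq : 1 ≤ q) : PBLs q = (PGs q + ((q : PowerSeries ℤ) - 1) * Gs q) * X ^ q
    + (PBLs q + (q : PowerSeries ℤ) * BLs q) * X ^ (q + 1) := by
  have hC : (q : PowerSeries ℤ) = C (q : ℤ) := (map_natCast (C (R := ℤ)) q).symm
  have hC1 : ((q : PowerSeries ℤ) - 1) = C ((q : ℤ) - 1) := by
    rw [hC, map_sub, map_one]
  rw [hC1, hC]
  ext n
  rw [map_add, coeff_mul_X_pow', coeff_mul_X_pow']
  simp only [PBLs, PGs, Gs, BLs, coeff_mk, map_add, coeff_C_mul]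
  rcases lt_trichotomy n q with h | heq | h
  · rw [if_neg (by omega), if_neg (by omega), pBL_lt hq h]
    simp
  · subst heq
    rw [if_pos le_rfl, if_neg (by omega), Nat.sub_self]
    have hcast : ((pBL n n : ℤ)) = (n : ℤ) - 1 := by
      rw [pBL_q hq]
      push_cast [hq]
      ring
    rw [hcast]
    simp [pG_zero, gA_zero, blA_lt]
  · obtain ⟨m, rfl⟩ : ∃ m, n = m + q + 1 := ⟨n - q - 1, by omega⟩
    rw [if_pos (by omega), if_pos (by omega),
      show m + q + 1 - q = m + 1 by omega, show m + q + 1 - (q + 1) = m by omega]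
    have h1 := sum_e7 hq m
    have hcast : ((q : ℤ) - 1) = ((q - 1 : ℕ) : ℤ) := by push_cast [hq]; ring
    rw [hcast]
    push_cast
    omega

lemma h9 (hq : 1 ≤ q) :
    BLs q * (1 - X ^ (q + 1)) = X ^ q * (1 - X) * Fs q := by
  linear_combination E5 hq - X ^ q * E3 hq

lemma h7 (hq : 1 ≤ q) :
    Fs q * (1 - 2 * X + X ^ (q + 2)) = 1 - X ^ (q + 1) := by
  linear_combination (1 - X ^ (q + 1)) * E1 hq + X ^ (q + 1) * E3 hq - X * E5 hq

lemma h8 (hq : 1 ≤ q) :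
    Ps q * (1 - X ^ (q + 1)) * (1 - 2 * X + X ^ (q + 2))
      = X * Fs q * ((1 - X ^ (q + 1)) ^ 2
          - (q : PowerSeries ℤ) * X ^ q * (1 - X)) := by
  linear_combination (1 - X ^ (q + 1)) ^ 2 * E2 hq
    - X * (1 - X ^ (q + 1)) * E6 hq
    + X ^ (q + 1) * (1 - X ^ (q + 1)) * E4 hq
    + (-(X * (1 - X ^ (q + 1))) - (q : PowerSeries ℤ) * X * X ^ (q + 1)) * h9 hq
    + ((q : PowerSeries ℤ) - 1) * X ^ (q + 1) * (1 - X ^ (q + 1)) * E3 hq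

lemma hfinal (hq : 1 ≤ q) :
    Ps q * (1 - 2 * X + X ^ (q + 2)) ^ 2 * (1 - X ^ (q + 1))
      = X * (1 - (q : PowerSeries ℤ) * X ^ q + (q : PowerSeries ℤ) * X ^ (q + 1)
          - 2 * X ^ (q + 1) + X ^ (2 * q + 2)) * (1 - X ^ (q + 1)) := by
  linear_combination (1 - 2 * X + X ^ (q + 2)) * h8 hq
    + (X * ((1 - X ^ (q + 1)) ^ 2 - (q : PowerSeries ℤ) * X ^ q * (1 - X))) * h7 hq

lemma one_sub_X_pow_ne_zero (k : ℕ) (hk : 0 < k) :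
    (1 - X ^ k : PowerSeries ℤ) ≠ 0 := by
  intro h
  have := congrArg (constantCoeff (R := ℤ)) h
  simp [map_sub, map_pow, constantCoeff_X, zero_pow hk.ne'] at this

end QDecGF

theorem qdecreasing_popularity_one_gf (q : ℕ) (hq : 1 ≤ q) :
    PowerSeries.mk (fun n => (qdecPopularity q true n : ℤ)) *
      (1 - 2 * PowerSeries.X + PowerSeries.X ^ (q + 2)) ^ 2 =
    PowerSeries.X *
      (1 - (q : PowerSeries ℤ) * PowerSeries.X ^ q
         + (q : PowerSeries ℤ) * PowerSeries.X ^ (q + 1)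
         - 2 * PowerSeries.X ^ (q + 1) + PowerSeries.X ^ (2 * q + 2)) := by
  have hmk : PowerSeries.mk (fun n => (qdecPopularity q true n : ℤ)) = QDecGF.Ps q := by
    ext n
    simp [QDecGF.Ps, PowerSeries.coeff_mk, QDecGF.popularity_eq]
  rw [hmk]
  apply mul_right_cancel₀ (QDecGF.one_sub_X_pow_ne_zero (q + 1) (by omega))
  exact QDecGF.hfinal hq
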